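/- arXiv:2408.01382 — 2 statements merged into one kernel-verified Lean document; each statement's English description precedes it below -/
import Mathlib

section
/- The vector-valued Shapley value satisfies efficiency: for every game v : Finset I → ℝ^m, the sum over all features i ∈ I of φ_i(v) equals v(I) − v(∅), where I is the full index set. (In the paper's terms: the perturbation of all Shapley compositions moves the base distribution to the predicted distribution.) -/
/-- The set of indices strictly preceding `i` in the ordering induced by the
permutation `π` of `Fin d` (where `π.symm i` is the position of player `i`). -/
def precede {d : ℕ} (π : Equiv.Perm (Fin d)) (i : Fin d) : Finset (Fin d) :=
  Finset.univ.filter (fun j => π.symm j < π.symm i)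

/-- The vector-valued Shapley value of feature `i` for the game
`v : Finset (Fin d) → (Fin m → ℝ)`:
`φ_i(v) = (1/d!) · Σ_π (v(π^{<i} ∪ {i}) − v(π^{<i}))`. -/
noncomputable def shapley {d m : ℕ} (v : Finset (Fin d) → (Fin m → ℝ)) (i : Fin d) :
    Fin m → ℝ :=
  ((d.factorial : ℝ))⁻¹ •
    ∑ π : Equiv.Perm (Fin d), (v (insert i (precede π i)) - v (precede π i))

/-- Efficiency: the Shapley values of all features sum to `v(I) − v(∅)`. -/
theorem shapley_efficiency (d m : ℕ) (hd : 1 ≤ d)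
    (v : Finset (Fin d) → (Fin m → ℝ)) :
    ∑ i : Fin d, shapley v i = v Finset.univ - v ∅ := by
  have key : ∀ π : Equiv.Perm (Fin d),
      ∑ i : Fin d, (v (insert i (precede π i)) - v (precede π i))
        = v Finset.univ - v ∅ := by
    intro π
    set A : ℕ → Finset (Fin d) := fun n => Finset.univ.filter (fun j => (π.symm j : ℕ) < n)
      with hA
    have h1 : ∀ k : Fin d, precede π (π k) = A (k : ℕ) := by
      intro k
      unfold precede
      rw [Equiv.symm_apply_apply]
      ext j
      simp only [hA, Finset.mem_filter, Finset.mem_univ, true_and, Fin.lt_def]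
    have h2 : ∀ k : Fin d, insert (π k) (precede π (π k)) = A ((k : ℕ) + 1) := by
      intro k
      rw [h1]
      ext j
      simp only [Finset.mem_insert, hA, Finset.mem_filter, Finset.mem_univ, true_and,
        Nat.lt_succ_iff_lt_or_eq]
      constructor
      · rintro (rfl | h)
        · right; simp
        · left; exact h
      · rintro (h | h)
        · right; exact h
        · left
          have : π.symm j = k := Fin.ext h
          rw [← this, Equiv.apply_symm_apply]
    have hre : ∑ i : Fin d, (v (insert i (precede π i)) - v (precede π i))
        = ∑ k : Fin d, (v (A ((k : ℕ) + 1)) - v (A (k : ℕ))) := by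
      rw [← Equiv.sum_comp π (fun i => v (insert i (precede π i)) - v (precede π i))]
      refine Finset.sum_congr rfl fun k _ => by rw [h2, h1]
    rw [hre, Fin.sum_univ_eq_sum_range (fun n => v (A (n + 1)) - v (A n)),
      Finset.sum_range_sub (fun n => v (A n))]
    have hAd : A d = Finset.univ := by
      ext j; simp [hA, (π.symm j).isLt]
    have hA0 : A 0 = ∅ := by
      ext j; simp [hA]
    rw [hAd, hA0]
  simp only [shapley, ← Finset.smul_sum]
  rw [Finset.sum_comm]
  simp only [key]
  rw [Finset.sum_const, Finset.card_univ, Fintype.card_perm, Fintype.card_fin, ← Nat.cast_smul_eq_nsmul ℝ,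
    smul_smul, inv_mul_cancel₀ (by positivity : (d.factorial : ℝ) ≠ 0), one_smul]
end

section
/- Unit-norm class-composition: let D ≥ 2, k ∈ {1, …, D} and 0 < p < 1/D. The Aitchison norm of the k-class-composition c^{(k)}(p) equals 1 if and only if p = exp(−√(D/(D−1))) / (1 + (D−1)·exp(−√(D/(D−1)))). In particular, this value of p satisfies 0 < p < 1/D and the i-th entry of the resulting unit-norm class-composition is (1/(1 + (D−1)exp(−√(D/(D−1))))) · (1 if i = k, exp(−√(D/(D−1))) otherwise). -/
open Real

/-- The Aitchison norm of a vector `x ∈ ℝ^D` with strictly positive entries: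
`‖x‖_A = √( (1/(2D)) Σ_i Σ_j (log(x_i/x_j))² )`. -/
noncomputable def aitchisonNorm (D : ℕ) (x : Fin D → ℝ) : ℝ :=
  Real.sqrt ((1 / (2 * (D : ℝ))) *
    ∑ i : Fin D, ∑ j : Fin D, (Real.log (x i / x j)) ^ 2)

/-- The `k`-class-composition `c^{(k)}(p) ∈ ℝ^D`: its `k`-th entry is
`1 − (D−1)p` and all its other entries are `p`. -/
noncomputable def classComp (D : ℕ) (k : Fin D) (p : ℝ) : Fin D → ℝ :=
  fun i => if i = k then 1 - ((D : ℝ) - 1) * p else p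

/-- The special value `p* = exp(−√(D/(D−1))) / (1 + (D−1)·exp(−√(D/(D−1))))`
making the class-compositions unit-norm. -/
noncomputable def pstar (D : ℕ) : ℝ :=
  Real.exp (-Real.sqrt ((D : ℝ) / ((D : ℝ) - 1))) /
    (1 + ((D : ℝ) - 1) * Real.exp (-Real.sqrt ((D : ℝ) / ((D : ℝ) - 1))))

lemma sum_ite_fin (D : ℕ) (k : Fin D) (c d : ℝ) :
    ∑ j : Fin D, (if j = k then c else d) = c + ((D : ℝ) - 1) * d := by
  have h1 : ∀ j : Fin D, (if j = k then c else d)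
      = (if j = k then c - d else 0) + d := by
    intro j; split <;> ring
  rw [Finset.sum_congr rfl fun j _ => h1 j, Finset.sum_add_distrib,
    Finset.sum_ite_eq' Finset.univ k (fun _ => c - d)]
  simp [Finset.card_univ, mul_comm]
  ring

/-- Unit-norm class-composition: for `0 < p < 1/D`, the Aitchison norm of
`c^{(k)}(p)` equals `1` iff `p = p*`; moreover `0 < p* < 1/D` and the `i`-th
entry of the resulting unit-norm class-composition is
`(1/(1 + (D−1)exp(−√(D/(D−1))))) · (1 if i = k, exp(−√(D/(D−1))) otherwise)`. -/
theorem aitchisonNorm_classComp_eq_one_iff (D : ℕ) (hD : 2 ≤ D) (k : Fin D) :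
    (∀ p : ℝ, 0 < p → p < 1 / (D : ℝ) →
      (aitchisonNorm D (classComp D k p) = 1 ↔ p = pstar D)) ∧
    (0 < pstar D ∧ pstar D < 1 / (D : ℝ)) ∧
    (∀ i : Fin D, classComp D k (pstar D) i
      = (1 / (1 + ((D : ℝ) - 1) * Real.exp (-Real.sqrt ((D : ℝ) / ((D : ℝ) - 1))))) *
          (if i = k then 1 else Real.exp (-Real.sqrt ((D : ℝ) / ((D : ℝ) - 1))))) := by
  set s : ℝ := Real.sqrt ((D : ℝ) / ((D : ℝ) - 1)) with hs_def
  have hD2 : (2 : ℝ) ≤ (D : ℝ) := by exact_mod_cast hD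
  have hD1pos : (0 : ℝ) < (D : ℝ) - 1 := by linarith
  have hDpos : (0 : ℝ) < (D : ℝ) := by linarith
  have harg : (0 : ℝ) < (D : ℝ) / ((D : ℝ) - 1) := by positivity
  have hspos : 0 < s := Real.sqrt_pos.mpr harg
  have hs2 : s ^ 2 = (D : ℝ) / ((D : ℝ) - 1) := Real.sq_sqrt harg.le
  have hexppos : 0 < Real.exp (-s) := Real.exp_pos _
  have hden : (0 : ℝ) < 1 + ((D : ℝ) - 1) * Real.exp (-s) := by positivity
  have hesD : (0 : ℝ) < Real.exp s + ((D : ℝ) - 1) := by positivity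
  have hexp1 : Real.exp (-s) * Real.exp s = 1 := by
    rw [← Real.exp_add]; simp
  have hpstar : pstar D = 1 / (Real.exp s + ((D : ℝ) - 1)) := by
    rw [pstar, ← hs_def, div_eq_div_iff hden.ne' hesD.ne']
    linear_combination hexp1
  have hpstarpos : 0 < pstar D := by
    rw [hpstar]; positivity
  have hpstarlt : pstar D < 1 / (D : ℝ) := by
    rw [hpstar, div_lt_div_iff₀ hesD hDpos]
    have : 1 < Real.exp s := by
      rw [← Real.exp_zero]; exact Real.exp_lt_exp.mpr hspos
    linarith
  refine ⟨?_, ⟨hpstarpos, hpstarlt⟩, ?_⟩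
  · intro p hp hpD
    have hDp : (D : ℝ) * p < 1 := by
      rw [mul_comm]; exact (lt_div_iff₀ hDpos).mp hpD
    have ha : 0 < 1 - ((D : ℝ) - 1) * p := by nlinarith
    have hap : p < 1 - ((D : ℝ) - 1) * p := by nlinarith
    set a : ℝ := 1 - ((D : ℝ) - 1) * p with ha_def
    set L : ℝ := Real.log (a / p) with hL_def
    have hLpos : 0 < L := Real.log_pos (by rw [lt_div_iff₀ hp]; linarith)
    -- compute the double sum
    have hterm : ∀ i j : Fin D, (Real.log (classComp D k p i / classComp D k p j)) ^ 2
        = if i = k then (if j = k then 0 else L ^ 2) else (if j = k then L ^ 2 else 0) := by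
      intro i j
      simp only [classComp, ← ha_def]
      by_cases hi : i = k <;> by_cases hj : j = k <;>
        simp only [hi, hj, if_true, if_false, ite_true, ite_false]
      · rw [div_self ha.ne']; simp
      · rw [hL_def]
      · rw [Real.log_div hp.ne' ha.ne', hL_def, Real.log_div ha.ne' hp.ne']; ring
      · rw [div_self hp.ne']; simp
    have hsum : ∑ i : Fin D, ∑ j : Fin D,
        (Real.log (classComp D k p i / classComp D k p j)) ^ 2
        = 2 * ((D : ℝ) - 1) * L ^ 2 := by
      have hinner : ∀ i : Fin D, ∑ j : Fin D,
          (Real.log (classComp D k p i / classComp D k p j)) ^ 2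
          = if i = k then ((D : ℝ) - 1) * L ^ 2 else L ^ 2 := by
        intro i
        rw [Finset.sum_congr rfl fun j _ => hterm i j]
        by_cases hi : i = k <;> simp only [hi, if_true, if_false, ite_true, ite_false] <;>
          rw [sum_ite_fin] <;> ring
      rw [Finset.sum_congr rfl fun i _ => hinner i, sum_ite_fin]
      ring
    have hnorm : aitchisonNorm D (classComp D k p)
        = Real.sqrt ((((D : ℝ) - 1) / (D : ℝ)) * L ^ 2) := by
      rw [aitchisonNorm, hsum]
      congr 1
      field_simp
    rw [hnorm, Real.sqrt_eq_one]
    have hiff1 : (((D : ℝ) - 1) / (D : ℝ)) * L ^ 2 = 1 ↔ L = s := by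
      constructor
      · intro h
        have hL2 : L ^ 2 = s ^ 2 := by
          rw [hs2]
          field_simp at h ⊢
          nlinarith [h]
        have hfac : (L - s) * (L + s) = 0 := by linear_combination hL2
        rcases mul_eq_zero.mp hfac with h' | h' <;> linarith
      · intro h
        rw [h, hs2]; field_simp
    rw [hiff1]
    constructor
    · intro hLs
      have hap' : a / p = Real.exp s := by
        rw [← Real.exp_log (by positivity : 0 < a / p), ← hL_def, hLs]
      have h3 : a = p * Real.exp s := by
        rw [← hap']; field_simp
      rw [hpstar, eq_div_iff hesD.ne']
      rw [ha_def] at h3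
      linarith [h3]
    · intro hps
      have hap' : a / p = Real.exp s := by
        rw [ha_def, hps, hpstar]
        have h2 := hesD.ne'
        field_simp
        ring
      have h4 : L = Real.log (Real.exp s) := by rw [hL_def, hap']
      rw [h4, Real.log_exp]
  · intro i
    simp only [classComp, hpstar]
    by_cases hik : i = k <;>
      simp only [hik, if_true, if_false, ite_true, ite_false, mul_one]
    · have h2 := hesD.ne'
      have h1 := hden.ne'
      field_simp
      linear_combination ((D : ℝ) - 1) * hexp1
    · have h2 := hesD.ne'
      have h1 := hden.ne'
      field_simp
      linear_combination -hexp1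
end
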